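/- arXiv:2005.07167 — 13 statements merged into one kernel-verified Lean document; each statement's English description precedes it below -/
import Mathlib

section
/- For all natural numbers t, |κ₂(t+1) − κ₂(t)| ≤ 2, where κ₂ satisfies κ₂(0)=0, κ₂(2t)=κ₂(t), κ₂(2t+1)=(κ₂(t)+κ₂(t+1))/2+1. -/
theorem stmt_1 (κ2 : ℕ → ℚ) (h2z : κ2 0 = 0)
    (h2e : ∀ t, κ2 (2*t) = κ2 t)
    (h2o : ∀ t, κ2 (2*t+1) = (κ2 t + κ2 (t+1))/2 + 1) : ∀ t : ℕ, |κ2 (t+1) - κ2 t| ≤ 2 := by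
  have h1 : κ2 1 = 2 := by
    have := h2o 0
    simp [h2z] at this
    linarith
  intro t
  induction t using Nat.strong_induction_on with
  | _ t ih =>
    match t with
    | 0 => simp [h2z, h1]
    | (n+1) =>
      rcases Nat.even_or_odd (n+1) with ⟨s, hs⟩ | ⟨s, hs⟩
      · -- t = 2s, s ≥ 1
        have hd : κ2 (n+1+1) - κ2 (n+1) = (κ2 (s+1) - κ2 s)/2 + 1 := by
          rw [hs]
          have e1 : s + s = 2*s := by ring
          rw [e1, show 2*s+1 = 2*s+1 from rfl, h2o s, h2e s]
          ring
        have hslt : s < n + 1 := by omega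
        have := ih s hslt
        rw [hd]
        rw [abs_le] at *
        constructor <;> linarith [this.1, this.2]
      · -- t = 2s+1
        have hd : κ2 (n+1+1) - κ2 (n+1) = (κ2 (s+1) - κ2 s)/2 - 1 := by
          rw [hs]
          have h2 : 2*s + 1 + 1 = 2*(s+1) := by ring
          rw [h2, h2e (s+1), h2o s]
          ring
        have hslt : s < n + 1 := by omega
        have := ih s hslt
        rw [hd]
        rw [abs_le] at *
        constructor <;> linarith [this.1, this.2]
end

section
/- Let M(t) denote the number of maximal blocks of consecutive 1s in the binary expansion of t. Then for all t ≥ 1, κ₂(t) ≥ M(t), where κ₂ satisfies κ₂(0)=0, κ₂(2t)=κ₂(t), κ₂(2t+1)=(κ₂(t)+κ₂(t+1))/2+1. -/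
/-- The number of maximal blocks of consecutive 1s in the binary expansion of `t`:
each such block is counted at its most significant bit. -/
def blockCount (t : ℕ) : ℕ :=
  ((Finset.range (t+1)).filter (fun i => t.testBit i = true ∧ t.testBit (i+1) = false)).card

lemma bc_sum (t n : ℕ) (h : t < n) :
    blockCount t = ∑ i ∈ Finset.range n,
      (if t.testBit i = true ∧ t.testBit (i+1) = false then 1 else 0) := by
  rw [blockCount, Finset.card_filter]
  apply Finset.sum_subset
  · exact Finset.range_subset_range.2 h
  · intro i hi hni
    simp only [Finset.mem_range] at hi hni
    have : t.testBit i = false := by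
      by_contra hb
      have hb' : t.testBit i = true := by simpa using hb
      have := Nat.ge_two_pow_of_testBit hb'
      have := Nat.lt_two_pow_self (n := i)
      omega
    simp [this]

lemma bc_even (t : ℕ) (ht : 1 ≤ t) : blockCount (2*t) = blockCount t := by
  rw [bc_sum (2*t) (2*t+1) (by omega), Finset.sum_range_succ',
      bc_sum t (2*t) (by omega)]
  have h0 : (2*t).testBit 0 = false := by
    simp [Nat.testBit_zero, Nat.mul_mod_right]
  have hs : ∀ i, (2*t).testBit (i+1) = t.testBit i := by
    intro i; rw [Nat.testBit_succ]; congr 1; omega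
  simp only [hs, h0]
  simp

lemma bc_odd (t : ℕ) :
    blockCount (2*t+1) = blockCount t + (if t % 2 = 0 then 1 else 0) := by
  rw [bc_sum (2*t+1) (2*t+2) (by omega), Finset.sum_range_succ',
      bc_sum t (2*t+1) (by omega)]
  have h0 : (2*t+1).testBit 0 = true := by
    simp [Nat.testBit_zero, Nat.mul_add_mod]
  have hs : ∀ i, (2*t+1).testBit (i+1) = t.testBit i := by
    intro i; rw [Nat.testBit_succ]; congr 1; omega
  simp only [hs, h0]
  have h1 : t.testBit 0 = decide (t % 2 = 1) := by simp [Nat.testBit_zero]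
  rcases Nat.even_or_odd t with he | ho
  · have : t % 2 = 0 := Nat.even_iff.mp he
    simp [h1, this]
  · have : t % 2 = 1 := Nat.odd_iff.mp ho
    simp [h1, this]

lemma bc_zero' : blockCount 0 = 0 := by decide

lemma bc_one' : blockCount 1 = 1 := by decide

lemma bc_mono : ∀ s : ℕ, blockCount s ≤ blockCount (s+1) + s % 2 := by
  intro s
  induction s using Nat.strong_induction_on with
  | _ s ih =>
    rcases Nat.even_or_odd s with ⟨u, hu⟩ | ⟨u, hu⟩
    · -- s = 2u
      subst hu
      rcases Nat.eq_zero_or_pos u with rfl | hu1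
      · simp [bc_zero']
      · have h1 : blockCount (u + u) = blockCount u := by
          have := bc_even u hu1; rw [two_mul] at this; exact this
        have h2 : blockCount (u + u + 1) = blockCount u + (if u % 2 = 0 then 1 else 0) := by
          have := bc_odd u; rw [two_mul] at this; exact this
        rw [h1, h2]; omega
    · -- s = 2u+1
      subst hu
      have h1 : blockCount (2*u + 1) = blockCount u + (if u % 2 = 0 then 1 else 0) := bc_odd u
      have h2 : blockCount (2*u + 1 + 1) = blockCount (u+1) := by
        have := bc_even (u+1) (by omega); rw [show 2*(u+1) = 2*u+1+1 by ring] at this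
        exact this
      have h3 := ih u (by omega)
      rw [h1, h2]
      rcases Nat.even_or_odd u with he | ho
      · have hm := Nat.even_iff.mp he
        rw [if_pos hm] at h1 ⊢; omega
      · have hm := Nat.odd_iff.mp ho
        rw [if_neg (by omega : ¬ u % 2 = 0)] at h1 ⊢; omega

theorem stmt_3 (κ2 : ℕ → ℚ) (h2z : κ2 0 = 0)
    (h2e : ∀ t, κ2 (2*t) = κ2 t)
    (h2o : ∀ t, κ2 (2*t+1) = (κ2 t + κ2 (t+1))/2 + 1) :
    ∀ t : ℕ, 1 ≤ t → (blockCount t : ℚ) ≤ κ2 t := by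
  have h1 : κ2 1 = 2 := by
    have := h2o 0
    rw [h2z] at this
    norm_num at this
    linarith
  have main : ∀ t : ℕ, (blockCount t : ℚ) ≤ κ2 t := by
    intro t
    induction t using Nat.strong_induction_on with
    | _ t ih =>
      rcases Nat.eq_zero_or_pos t with rfl | ht
      · simp [bc_zero', h2z]
      rcases Nat.even_or_odd t with ⟨u, hu⟩ | ⟨u, hu⟩
      · have hu1 : 1 ≤ u := by omega
        have h2 : t = 2*u := by omega
        subst h2
        rw [bc_even u hu1, h2e u]
        exact ih u (by omega)
      · have h2 : t = 2*u + 1 := by omega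
        subst h2
        rcases Nat.eq_zero_or_pos u with rfl | hu1
        · simpa [bc_one', h1] using (by norm_num : (1:ℚ) ≤ 2)
        have ihu : (blockCount u : ℚ) ≤ κ2 u := ih u (by omega)
        have ihu1 : (blockCount (u+1) : ℚ) ≤ κ2 (u+1) := ih (u+1) (by omega)
        have hQ : blockCount u ≤ blockCount (u+1) + u % 2 := bc_mono u
        rw [h2o u, bc_odd u]
        rcases Nat.even_or_odd u with he | ho
        · have hm : u % 2 = 0 := Nat.even_iff.mp he
          have : (blockCount u : ℚ) ≤ blockCount (u+1) := by
            have : blockCount u ≤ blockCount (u+1) := by omega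
            exact_mod_cast this
          simp only [hm, if_pos rfl]
          push_cast
          linarith
        · have hm : u % 2 = 1 := Nat.odd_iff.mp ho
          have : (blockCount u : ℚ) ≤ blockCount (u+1) + 1 := by
            have : blockCount u ≤ blockCount (u+1) + 1 := by omega
            exact_mod_cast this
          simp only [hm]
          norm_num
          linarith
  intro t _
  exact main t
end

section
/- Define κ₃ : ℕ → ℚ by κ₃(0)=0, κ₃(2t)=κ₃(t), κ₃(2t+1)=(κ₃(t)+κ₃(t+1))/2 + (3/2)(κ₂(t)−κ₂(t+1)). Then for all t, |κ₃(t+1) − κ₃(t)| ≤ 6. -/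
theorem stmt_5 (κ2 : ℕ → ℚ) (h2z : κ2 0 = 0)
    (h2e : ∀ t, κ2 (2*t) = κ2 t)
    (h2o : ∀ t, κ2 (2*t+1) = (κ2 t + κ2 (t+1))/2 + 1) (κ3 : ℕ → ℚ) (h3z : κ3 0 = 0)
    (h3e : ∀ t, κ3 (2*t) = κ3 t)
    (h3o : ∀ t, κ3 (2*t+1) = (κ3 t + κ3 (t+1))/2 + (3/2)*(κ2 t - κ2 (t+1))) : ∀ t : ℕ, |κ3 (t+1) - κ3 t| ≤ 6 := by
  have h21 : κ2 1 = 2 := by have h := h2o 0; rw [h2z] at h; norm_num at h; linarith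
  have h31 : κ3 1 = -6 := by
    have h := h3o 0; rw [h3z, h2z, h21] at h; norm_num at h; linarith
  have hb2 : ∀ t, |κ2 (t+1) - κ2 t| ≤ 2 := by
    intro t
    induction t using Nat.strong_induction_on with
    | _ t ih =>
      match t, ih with
      | 0, _ => rw [h21, h2z]; norm_num
      | Nat.succ n, ih =>
        rcases Nat.even_or_odd (n+1) with ⟨k, hk⟩ | ⟨k, hk⟩
        · have hik := ih k (by omega)
          have e1 : κ2 (n+1+1) = (κ2 k + κ2 (k+1))/2 + 1 := by
            rw [show n+1+1 = 2*k+1 by omega, h2o]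
          have e2 : κ2 (n+1) = κ2 k := by rw [show n+1 = 2*k by omega, h2e]
          rw [abs_le] at hik ⊢
          obtain ⟨l, r⟩ := hik
          constructor <;> · rw [e1, e2]; linarith
        · have hik := ih k (by omega)
          have e1 : κ2 (n+1+1) = κ2 (k+1) := by
            rw [show n+1+1 = 2*(k+1) by omega, h2e]
          have e2 : κ2 (n+1) = (κ2 k + κ2 (k+1))/2 + 1 := by
            rw [show n+1 = 2*k+1 by omega, h2o]
          rw [abs_le] at hik ⊢
          obtain ⟨l, r⟩ := hik
          constructor <;> · rw [e1, e2]; linarith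
  intro t
  induction t using Nat.strong_induction_on with
  | _ t ih =>
    match t, ih with
    | 0, _ => rw [h31, h3z]; norm_num
    | Nat.succ n, ih =>
      rcases Nat.even_or_odd (n+1) with ⟨k, hk⟩ | ⟨k, hk⟩
      · have hik := ih k (by omega)
        have hk2 := hb2 k
        have e1 : κ3 (n+1+1) = (κ3 k + κ3 (k+1))/2 + (3/2)*(κ2 k - κ2 (k+1)) := by
          rw [show n+1+1 = 2*k+1 by omega, h3o]
        have e2 : κ3 (n+1) = κ3 k := by rw [show n+1 = 2*k by omega, h3e]
        rw [abs_le] at hik hk2 ⊢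
        obtain ⟨l, r⟩ := hik
        obtain ⟨l2, r2⟩ := hk2
        constructor <;> · rw [e1, e2]; linarith
      · have hik := ih k (by omega)
        have hk2 := hb2 k
        have e1 : κ3 (n+1+1) = κ3 (k+1) := by
          rw [show n+1+1 = 2*(k+1) by omega, h3e]
        have e2 : κ3 (n+1) = (κ3 k + κ3 (k+1))/2 + (3/2)*(κ2 k - κ2 (k+1)) := by
          rw [show n+1 = 2*k+1 by omega, h3o]
        rw [abs_le] at hik hk2 ⊢
        obtain ⟨l, r⟩ := hik
        obtain ⟨l2, r2⟩ := hk2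
        constructor <;> · rw [e1, e2]; linarith
end

section
/- Define κ₄ : ℕ → ℚ by κ₄(0)=0, κ₄(2t)=κ₄(t), κ₄(2t+1)=(κ₄(t)+κ₄(t+1))/2 + 2(κ₃(t)−κ₃(t+1)) + (3/4)(κ₂(t)−κ₂(t+1))² − 2. Then for all t, |κ₄(t+1) − κ₄(t)| ≤ 28. -/
theorem stmt_6 (κ2 : ℕ → ℚ) (h2z : κ2 0 = 0)
    (h2e : ∀ t, κ2 (2*t) = κ2 t)
    (h2o : ∀ t, κ2 (2*t+1) = (κ2 t + κ2 (t+1))/2 + 1) (κ3 : ℕ → ℚ) (h3z : κ3 0 = 0)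
    (h3e : ∀ t, κ3 (2*t) = κ3 t)
    (h3o : ∀ t, κ3 (2*t+1) = (κ3 t + κ3 (t+1))/2 + (3/2)*(κ2 t - κ2 (t+1))) (κ4 : ℕ → ℚ) (h4z : κ4 0 = 0)
    (h4e : ∀ t, κ4 (2*t) = κ4 t)
    (h4o : ∀ t, κ4 (2*t+1) = (κ4 t + κ4 (t+1))/2 + 2*(κ3 t - κ3 (t+1))
        + (3/4)*(κ2 t - κ2 (t+1))^2 - 2) : ∀ t : ℕ, |κ4 (t+1) - κ4 t| ≤ 28 := by
  have h21 : κ2 1 = 2 := by have h := h2o 0; norm_num [h2z] at h; linarith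
  have h31 : κ3 1 = -6 := by have h := h3o 0; norm_num [h2z, h3z, h21] at h; linarith
  have h41 : κ4 1 = 26 := by
    have h := h4o 0; norm_num [h2z, h3z, h4z, h21, h31] at h; linarith
  have key : ∀ t : ℕ,
      (-2 ≤ κ2 (t+1) - κ2 t ∧ κ2 (t+1) - κ2 t ≤ 2) ∧
      (-6 ≤ κ3 (t+1) - κ3 t ∧ κ3 (t+1) - κ3 t ≤ 2 ∧
        κ3 (t+1) - κ3 t ≤ 4 + 3*(κ2 (t+1) - κ2 t) ∧
        κ3 (t+1) - κ3 t ≤ 4 - 3*(κ2 (t+1) - κ2 t)) ∧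
      (-26 ≤ κ4 (t+1) - κ4 t ∧ κ4 (t+1) - κ4 t ≤ 26) := by
    intro t
    induction t using Nat.strong_induction_on with
    | _ t ih =>
      match t with
      | 0 =>
        norm_num [h2z, h3z, h4z, h21, h31, h41]
      | (n+1) =>
        rcases Nat.even_or_odd (n+1) with ⟨s, hs⟩ | ⟨s, hs⟩
        · -- t = 2*s, s ≥ 1
          have hs' : n + 1 = 2*s := by omega
          have hslt : s < n + 1 := by omega
          obtain ⟨⟨hu1, hu2⟩, ⟨hv1, hv2, hv3, hv4⟩, hw1, hw2⟩ := ih s hslt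
          have e2 : κ2 (2*s+1) - κ2 (2*s) = (κ2 (s+1) - κ2 s)/2 + 1 := by
            rw [h2o s, h2e s]; ring
          have e3 : κ3 (2*s+1) - κ3 (2*s)
              = (κ3 (s+1) - κ3 s)/2 - (3/2)*(κ2 (s+1) - κ2 s) := by
            rw [h3o s, h3e s]; ring
          have e4 : κ4 (2*s+1) - κ4 (2*s)
              = (κ4 (s+1) - κ4 s)/2 - 2*(κ3 (s+1) - κ3 s)
                + (3/4)*(κ2 (s+1) - κ2 s)^2 - 2 := by
            rw [h4o s, h4e s]; ring
          rw [hs']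
          rw [e2, e3, e4]
          have hsq : (κ2 (s+1) - κ2 s)^2 ≤ 4 := by nlinarith
          have hsq0 : (0:ℚ) ≤ (κ2 (s+1) - κ2 s)^2 := sq_nonneg _
          refine ⟨⟨by linarith, by linarith⟩,
            ⟨by linarith, by linarith, by linarith, by linarith⟩,
            by linarith, by linarith⟩
        · -- t = 2*s+1
          have hs' : n + 1 = 2*s + 1 := by omega
          have hslt : s < n + 1 := by omega
          obtain ⟨⟨hu1, hu2⟩, ⟨hv1, hv2, hv3, hv4⟩, hw1, hw2⟩ := ih s hslt
          have e2 : κ2 (2*s+1+1) - κ2 (2*s+1) = (κ2 (s+1) - κ2 s)/2 - 1 := by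
            have : κ2 (2*s+1+1) = κ2 (s+1) := by
              have := h2e (s+1); rw [show 2*(s+1) = 2*s+1+1 by ring] at this; exact this
            rw [this, h2o s]; ring
          have e3 : κ3 (2*s+1+1) - κ3 (2*s+1)
              = (κ3 (s+1) - κ3 s)/2 + (3/2)*(κ2 (s+1) - κ2 s) := by
            have : κ3 (2*s+1+1) = κ3 (s+1) := by
              have := h3e (s+1); rw [show 2*(s+1) = 2*s+1+1 by ring] at this; exact this
            rw [this, h3o s]; ring
          have e4 : κ4 (2*s+1+1) - κ4 (2*s+1)
              = (κ4 (s+1) - κ4 s)/2 + 2*(κ3 (s+1) - κ3 s)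
                - (3/4)*(κ2 (s+1) - κ2 s)^2 + 2 := by
            have : κ4 (2*s+1+1) = κ4 (s+1) := by
              have := h4e (s+1); rw [show 2*(s+1) = 2*s+1+1 by ring] at this; exact this
            rw [this, h4o s]; ring
          rw [hs']
          rw [e2, e3, e4]
          have hsq : (κ2 (s+1) - κ2 s)^2 ≤ 4 := by nlinarith
          have hsq0 : (0:ℚ) ≤ (κ2 (s+1) - κ2 s)^2 := sq_nonneg _
          refine ⟨⟨by linarith, by linarith⟩,
            ⟨by linarith, by linarith, by linarith, by linarith⟩,
            by linarith, by linarith⟩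
  intro t
  obtain ⟨_, _, hw1, hw2⟩ := key t
  rw [abs_le]
  constructor <;> linarith
end

section
/- Define κ₅ : ℕ → ℚ by κ₅(0)=0, κ₅(2t)=κ₅(t), κ₅(2t+1)=(κ₅(t)+κ₅(t+1))/2 + (5/2)(κ₄(t)−κ₄(t+1)) + (5/2)(κ₂(t)−κ₂(t+1))(κ₃(t)−κ₃(t+1)) − 10(κ₂(t)−κ₂(t+1)). Then for all t, |κ₅(t+1) − κ₅(t)| ≤ 240. -/
set_option maxHeartbeats 800000 in
private lemma kappa_step (s x y z w x' y' z' w' : ℚ) (hs : s = 1 ∨ s = -1)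
    (ex : x' = x/2 + s) (ey : y' = y/2 - 3/2*s*x)
    (ez : z' = z/2 + s*(-2*y + 3/4*x^2 - 2))
    (ew : w' = w/2 + s*(-(5/2)*z + 5/2*(x*y) + 10*x))
    (hx : |x| ≤ 2) (hqa : 0 ≤ y + 3/2*x^2) (hqb : y + 3/2*x^2 ≤ 3)
    (hz : |z| ≤ 26) (hw : |w| ≤ 240) :
    |x'| ≤ 2 ∧ (0 ≤ y' + 3/2*x'^2 ∧ y' + 3/2*x'^2 ≤ 3) ∧ |z'| ≤ 26 ∧ |w'| ≤ 240 := by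
  rw [abs_le] at hx hz hw
  have hx2 : x^2 ≤ 4 := by nlinarith [hx.1, hx.2]
  have hy1 : -6 ≤ y := by linarith
  have hy2 : y ≤ 6 := by nlinarith [sq_nonneg x]
  have hxy1 : x*y ≤ 12 := by
    nlinarith [mul_nonneg (by linarith : (0:ℚ) ≤ 2-x) (by linarith : (0:ℚ) ≤ 6-y),
      mul_nonneg (by linarith : (0:ℚ) ≤ 2+x) (by linarith : (0:ℚ) ≤ 6+y)]
  have hxy2 : -12 ≤ x*y := by
    nlinarith [mul_nonneg (by linarith : (0:ℚ) ≤ 2-x) (by linarith : (0:ℚ) ≤ 6+y),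
      mul_nonneg (by linarith : (0:ℚ) ≤ 2+x) (by linarith : (0:ℚ) ≤ 6-y)]
  rcases hs with rfl | rfl <;> subst ex ey ez ew <;>
    refine ⟨abs_le.2 ⟨by linarith, by linarith⟩, ⟨?_, ?_⟩,
      abs_le.2 ⟨by nlinarith [hz.1, hqb, hx2], by nlinarith [hz.2, hqa, hx2]⟩,
      abs_le.2 ⟨by linarith [hw.1, hz.2, hxy2, hx.1, hz.1, hxy1, hx.2],
        by linarith [hw.2, hz.1, hxy1, hx.2, hz.2, hxy2, hx.1]⟩⟩ <;>
    nlinarith [hqa, hqb, hx2]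

theorem stmt_7 (κ2 : ℕ → ℚ) (h2z : κ2 0 = 0)
    (h2e : ∀ t, κ2 (2*t) = κ2 t)
    (h2o : ∀ t, κ2 (2*t+1) = (κ2 t + κ2 (t+1))/2 + 1) (κ3 : ℕ → ℚ) (h3z : κ3 0 = 0)
    (h3e : ∀ t, κ3 (2*t) = κ3 t)
    (h3o : ∀ t, κ3 (2*t+1) = (κ3 t + κ3 (t+1))/2 + (3/2)*(κ2 t - κ2 (t+1))) (κ4 : ℕ → ℚ) (h4z : κ4 0 = 0)
    (h4e : ∀ t, κ4 (2*t) = κ4 t)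
    (h4o : ∀ t, κ4 (2*t+1) = (κ4 t + κ4 (t+1))/2 + 2*(κ3 t - κ3 (t+1))
        + (3/4)*(κ2 t - κ2 (t+1))^2 - 2) (κ5 : ℕ → ℚ) (h5z : κ5 0 = 0)
    (h5e : ∀ t, κ5 (2*t) = κ5 t)
    (h5o : ∀ t, κ5 (2*t+1) = (κ5 t + κ5 (t+1))/2 + (5/2)*(κ4 t - κ4 (t+1))
        + (5/2)*(κ2 t - κ2 (t+1))*(κ3 t - κ3 (t+1)) - 10*(κ2 t - κ2 (t+1))) : ∀ t : ℕ, |κ5 (t+1) - κ5 t| ≤ 240 := by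
  have e21 : κ2 1 = 2 := by
    have := h2o 0; norm_num [h2z] at this; linarith
  have e31 : κ3 1 = -6 := by
    have := h3o 0; norm_num [h2z, h3z, e21] at this; linarith
  have e41 : κ4 1 = 26 := by
    have := h4o 0; norm_num [h2z, h3z, h4z, e21, e31] at this; linarith
  have e51 : κ5 1 = -150 := by
    have := h5o 0; norm_num [h2z, h3z, h4z, h5z, e21, e31, e41] at this; linarith
  have main : ∀ t : ℕ,
      |κ2 (t+1) - κ2 t| ≤ 2 ∧
      (0 ≤ (κ3 (t+1) - κ3 t) + 3/2*(κ2 (t+1) - κ2 t)^2 ∧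
        (κ3 (t+1) - κ3 t) + 3/2*(κ2 (t+1) - κ2 t)^2 ≤ 3) ∧
      |κ4 (t+1) - κ4 t| ≤ 26 ∧ |κ5 (t+1) - κ5 t| ≤ 240 := by
    intro t
    induction t using Nat.strong_induction_on with
    | _ t ih =>
      obtain ⟨u, rfl | rfl⟩ := Nat.even_or_odd' t
      · rcases Nat.eq_zero_or_pos u with rfl | hu
        · norm_num [h2z, h3z, h4z, h5z, e21, e31, e41, e51, abs_le]
        · obtain ⟨hx, ⟨hqa, hqb⟩, hz, hw⟩ := ih u (by omega)
          exact kappa_step 1 _ _ _ _ _ _ _ _ (Or.inl rfl)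
            (by rw [h2o u, h2e u]; ring) (by rw [h3o u, h3e u]; ring)
            (by rw [h4o u, h4e u]; ring) (by rw [h5o u, h5e u]; ring)
            hx hqa hqb hz hw
      · obtain ⟨hx, ⟨hqa, hqb⟩, hz, hw⟩ := ih u (by omega)
        have h2s : κ2 (2*u+1+1) = κ2 (u+1) := by
          have h : 2*u+1+1 = 2*(u+1) := by ring
          rw [h, h2e]
        have h3s : κ3 (2*u+1+1) = κ3 (u+1) := by
          have h : 2*u+1+1 = 2*(u+1) := by ring
          rw [h, h3e]
        have h4s : κ4 (2*u+1+1) = κ4 (u+1) := by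
          have h : 2*u+1+1 = 2*(u+1) := by ring
          rw [h, h4e]
        have h5s : κ5 (2*u+1+1) = κ5 (u+1) := by
          have h : 2*u+1+1 = 2*(u+1) := by ring
          rw [h, h5e]
        exact kappa_step (-1) _ _ _ _ _ _ _ _ (Or.inr rfl)
          (by rw [h2s, h2o u]; ring) (by rw [h3s, h3o u]; ring)
          (by rw [h4s, h4o u]; ring) (by rw [h5s, h5o u]; ring)
          hx hqa hqb hz hw
  intro t
  exact (main t).2.2.2
end

section
/- Define D(t)=κ₂(t)−κ₃(t)/3. Then D(t) ≥ 4 for all t ≥ 1. -/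
theorem stmt_11 (κ2 : ℕ → ℚ) (h2z : κ2 0 = 0)
    (h2e : ∀ t, κ2 (2*t) = κ2 t)
    (h2o : ∀ t, κ2 (2*t+1) = (κ2 t + κ2 (t+1))/2 + 1) (κ3 : ℕ → ℚ) (h3z : κ3 0 = 0)
    (h3e : ∀ t, κ3 (2*t) = κ3 t)
    (h3o : ∀ t, κ3 (2*t+1) = (κ3 t + κ3 (t+1))/2 + (3/2)*(κ2 t - κ2 (t+1))) :
    ∀ t : ℕ, 1 ≤ t → 4 ≤ κ2 t - κ3 t / 3 := by
  have hκ21 : κ2 1 = 2 := by have := h2o 0; rw [h2z] at this; linarith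
  have hκ31 : κ3 1 = -6 := by
    have := h3o 0; rw [h3z, h2z, hκ21] at this; linarith
  have hQ : ∀ t : ℕ, -2 ≤ κ2 (t+1) - κ2 t ∧ κ2 (t+1) - κ2 t ≤ 2 := by
    intro t
    induction t using Nat.strong_induction_on with
    | _ t ih =>
      match t with
      | 0 => rw [h2z, hκ21]; norm_num
      | Nat.succ n =>
        rcases Nat.even_or_odd n with ⟨s, hs⟩ | ⟨s, hs⟩
        · rw [show n+1+1 = 2*(s+1) by omega, h2e, show n.succ = 2*s+1 by omega, h2o]
          obtain ⟨l, r⟩ := ih s (by omega)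
          constructor <;> linarith
        · rw [show n+1+1 = 2*(s+1)+1 by omega, h2o, show n.succ = 2*(s+1) by omega, h2e]
          obtain ⟨l, r⟩ := ih (s+1) (by omega)
          constructor <;> linarith
  intro t
  induction t using Nat.strong_induction_on with
  | _ t ih =>
    intro ht
    rcases Nat.even_or_odd t with ⟨s, hs⟩ | ⟨s, hs⟩
    · rw [show t = 2*s by omega, h2e, h3e]
      exact ih s (by omega) (by omega)
    · rcases Nat.eq_zero_or_pos s with hs0 | hs1
      · rw [show t = 1 by omega, hκ21, hκ31]; norm_num
      · rw [show t = 2*s+1 by omega, h2o, h3o]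
        have I1 := ih s (by omega) (by omega)
        have I2 := ih (s+1) (by omega) (by omega)
        obtain ⟨l, r⟩ := hQ s
        linarith
end

section
/- For all t ≥ 0 and k ≥ 0, κ₂(2^{k+1}·t + 2^k − 1) = ((2^k+1)/2^{k+1})·κ₂(t) + ((2^k−1)/2^{k+1})·κ₂(t+1) + 3(2^k−1)/2^k. -/
theorem stmt_12 (κ2 : ℕ → ℚ) (h2z : κ2 0 = 0)
    (h2e : ∀ t, κ2 (2*t) = κ2 t)
    (h2o : ∀ t, κ2 (2*t+1) = (κ2 t + κ2 (t+1))/2 + 1) :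
    ∀ t k : ℕ,
      κ2 (2^(k+1)*t + 2^k - 1)
        = ((2^k+1)/2^(k+1)) * κ2 t + (((2:ℚ)^k-1)/2^(k+1)) * κ2 (t+1)
          + 3*((2:ℚ)^k-1)/2^k := by
  have hpow : ∀ k n, κ2 (2^k * n) = κ2 n := by
    intro k
    induction k with
    | zero => intro n; simp
    | succ k ih =>
      intro n
      have : 2^(k+1) * n = 2^k * (2 * n) := by ring
      rw [this, ih, h2e]
  intro t k
  induction k with
  | zero =>
    simp only [pow_zero, pow_one]
    norm_num
    rw [h2e]
  | succ k ih =>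
    have h1 : (2:ℕ)^k ≥ 1 := Nat.one_le_two_pow
    have e1 : (2:ℕ)^(k+1)*t = 2 * (2^k*t) := by ring
    have e2 : (2:ℕ)^(k+1+1)*t = 4 * (2^k*t) := by ring
    have e3 : (2:ℕ)^(k+1) = 2 * 2^k := by ring
    have hm : 2^(k+1+1)*t + 2^(k+1) - 1 = 2*(2^(k+1)*t + 2^k - 1) + 1 := by
      rw [e1, e2, e3]; omega
    rw [hm, h2o]
    have hm1 : 2^(k+1)*t + 2^k - 1 + 1 = 2^k * (2*t+1) := by
      have e4 : (2:ℕ)^k * (2*t+1) = 2*(2^k*t) + 2^k := by ring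
      rw [e1, e4]; omega
    rw [ih, hm1, hpow, h2o]
    have h2 : ((2:ℚ))^k ≠ 0 := by positivity
    have h3 : ((2:ℚ))^(k+1) ≠ 0 := by positivity
    have h4 : ((2:ℚ))^(k+2) ≠ 0 := by positivity
    field_simp
    ring
end

section
/- For all t ≥ 0 and k ≥ 0, with D(t)=κ₂(t)−κ₃(t)/3, one has D(2^{k+1}t+2^k−1) = ((2^k+1)/2^{k+1})D(t) + ((2^k−1)/2^{k+1})D(t+1) + (1/2 + (k−1)/2^{k+1})(κ₂(t+1)−κ₂(t)) + 1 + (3k−1)/2^k. -/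
private lemma pow_mul_eq (f : ℕ → ℚ) (he : ∀ t, f (2*t) = f t) :
    ∀ k n, f (2^k * n) = f n := by
  intro k
  induction k with
  | zero => intro n; simp
  | succ k ih =>
    intro n
    have h : 2^(k+1) * n = 2^k * (2 * n) := by ring
    rw [h, ih, he]

private lemma lemA (κ2 : ℕ → ℚ)
    (h2e : ∀ t, κ2 (2*t) = κ2 t)
    (h2o : ∀ t, κ2 (2*t+1) = (κ2 t + κ2 (t+1))/2 + 1) :
    ∀ k t, κ2 (2^(k+1)*t + 2^k - 1)
      = (1/2 + 1/2^(k+1)) * κ2 t + (1/2 - 1/2^(k+1)) * κ2 (t+1) + 3 - 3/2^k := by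
  intro k
  induction k with
  | zero =>
    intro t
    have h : 2^(0+1)*t + 2^0 - 1 = 2*t := by norm_num
    rw [h, h2e]; ring
  | succ k ih =>
    intro t
    have hp : 1 ≤ 2^k := Nat.one_le_two_pow
    have e1 : (2:ℕ)^(k+1) = 2 * 2^k := by ring
    have e1' : (2:ℕ)^(k+1+1)*t = 4*(2^k*t) := by ring
    have e2' : (2:ℕ)^(k+1)*t = 2*(2^k*t) := by ring
    have e3 : 2^k*(2*t+1) = 2*(2^k*t)+2^k := by ring
    have h1 : 2^(k+1+1)*t + 2^(k+1) - 1 = 2*(2^(k+1)*t + 2^k - 1) + 1 := by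
      rw [e1', e2', e1]; omega
    have h2 : (2^(k+1)*t + 2^k - 1) + 1 = 2^k * (2*t+1) := by
      rw [e2', e3]; omega
    have hq : (2:ℚ)^k ≠ 0 := by positivity
    rw [h1, h2o, ih, h2, pow_mul_eq κ2 h2e, h2o]
    field_simp
    ring

private lemma lemB (κ2 : ℕ → ℚ)
    (h2e : ∀ t, κ2 (2*t) = κ2 t)
    (h2o : ∀ t, κ2 (2*t+1) = (κ2 t + κ2 (t+1))/2 + 1)
    (κ3 : ℕ → ℚ)
    (h3e : ∀ t, κ3 (2*t) = κ3 t)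
    (h3o : ∀ t, κ3 (2*t+1) = (κ3 t + κ3 (t+1))/2 + (3/2)*(κ2 t - κ2 (t+1))) :
    ∀ (k t : ℕ), κ3 (2^(k+1)*t + 2^k - 1)
      = (1/2 + 1/2^(k+1)) * κ3 t + (1/2 - 1/2^(k+1)) * κ3 (t+1)
        + (3/2 + 3*((k:ℚ)-1)/2^(k+1)) * (κ2 t - κ2 (t+1)) + 6 - 6/2^k - 9*(k:ℚ)/2^k := by
  intro k
  induction k with
  | zero =>
    intro t
    have h : 2^(0+1)*t + 2^0 - 1 = 2*t := by norm_num
    rw [h, h3e]; push_cast; ring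
  | succ k ih =>
    intro t
    have hp : 1 ≤ 2^k := Nat.one_le_two_pow
    have e1 : (2:ℕ)^(k+1) = 2 * 2^k := by ring
    have e1' : (2:ℕ)^(k+1+1)*t = 4*(2^k*t) := by ring
    have e2' : (2:ℕ)^(k+1)*t = 2*(2^k*t) := by ring
    have e3 : 2^k*(2*t+1) = 2*(2^k*t)+2^k := by ring
    have h1 : 2^(k+1+1)*t + 2^(k+1) - 1 = 2*(2^(k+1)*t + 2^k - 1) + 1 := by
      rw [e1', e2', e1]; omega
    have h2 : (2^(k+1)*t + 2^k - 1) + 1 = 2^k * (2*t+1) := by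
      rw [e2', e3]; omega
    have hq : (2:ℚ)^k ≠ 0 := by positivity
    rw [h1, h3o, ih, h2, pow_mul_eq κ3 h3e, pow_mul_eq κ2 h2e, h3o, h2o,
      lemA κ2 h2e h2o]
    push_cast
    field_simp
    ring

theorem stmt_13 (κ2 : ℕ → ℚ) (h2z : κ2 0 = 0)
    (h2e : ∀ t, κ2 (2*t) = κ2 t)
    (h2o : ∀ t, κ2 (2*t+1) = (κ2 t + κ2 (t+1))/2 + 1) (κ3 : ℕ → ℚ) (h3z : κ3 0 = 0)
    (h3e : ∀ t, κ3 (2*t) = κ3 t)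
    (h3o : ∀ t, κ3 (2*t+1) = (κ3 t + κ3 (t+1))/2 + (3/2)*(κ2 t - κ2 (t+1))) :
    ∀ t k : ℕ,
      κ2 (2^(k+1)*t + 2^k - 1) - κ3 (2^(k+1)*t + 2^k - 1) / 3
        = ((2^k+1)/2^(k+1)) * (κ2 t - κ3 t / 3)
          + (((2:ℚ)^k-1)/2^(k+1)) * (κ2 (t+1) - κ3 (t+1) / 3)
          + (1/2 + ((k:ℚ)-1)/2^(k+1)) * (κ2 (t+1) - κ2 t)
          + 1 + (3*(k:ℚ)-1)/2^k := by
  intro t k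
  have hq : (2:ℚ)^k ≠ 0 := by positivity
  rw [lemA κ2 h2e h2o, lemB κ2 h2e h2o κ3 h3e h3o]
  field_simp
  ring
end

section
/- For all t ≥ 0 and k ≥ 1, D(2^{k+1}t+2^k−1) ≥ min(D(t), D(t+1)) + k/2^{k−1}, where D(t)=κ₂(t)−κ₃(t)/3. -/
theorem stmt_14 (κ2 : ℕ → ℚ) (h2z : κ2 0 = 0)
    (h2e : ∀ t, κ2 (2*t) = κ2 t)
    (h2o : ∀ t, κ2 (2*t+1) = (κ2 t + κ2 (t+1))/2 + 1) (κ3 : ℕ → ℚ) (h3z : κ3 0 = 0)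
    (h3e : ∀ t, κ3 (2*t) = κ3 t)
    (h3o : ∀ t, κ3 (2*t+1) = (κ3 t + κ3 (t+1))/2 + (3/2)*(κ2 t - κ2 (t+1))) :
    ∀ t k : ℕ, 1 ≤ k →
      min (κ2 t - κ3 t / 3) (κ2 (t+1) - κ3 (t+1) / 3) + (k:ℚ)/2^(k-1)
        ≤ κ2 (2^(k+1)*t + 2^k - 1) - κ3 (2^(k+1)*t + 2^k - 1) / 3 := by
  -- κ (2^j * s) = κ s
  have hp2 : ∀ j s, κ2 (2^j * s) = κ2 s := by
    intro j
    induction j with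
    | zero => intro s; simp
    | succ n ih =>
        intro s
        have h : 2^(n+1)*s = 2*(2^n*s) := by ring
        rw [h, h2e, ih]
  have hp3 : ∀ j s, κ3 (2^j * s) = κ3 s := by
    intro j
    induction j with
    | zero => intro s; simp
    | succ n ih =>
        intro s
        have h : 2^(n+1)*s = 2*(2^n*s) := by ring
        rw [h, h3e, ih]
  -- |κ2 (t+1) - κ2 t| ≤ 2
  have hone : κ2 1 = 2 := by have h := h2o 0; norm_num [h2z] at h; linarith
  have hd : ∀ t, -2 ≤ κ2 (t+1) - κ2 t ∧ κ2 (t+1) - κ2 t ≤ 2 := by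
    intro t
    induction t using Nat.strong_induction_on with
    | _ t ih =>
      rcases Nat.even_or_odd t with ⟨s, hs⟩ | ⟨s, hs⟩
      · rcases Nat.eq_zero_or_pos s with hs0 | hs0
        · subst hs; subst hs0
          norm_num [h2z, hone]
        · have hst : s < t := by omega
          have ihs := ih s hst
          have h1 : t = 2*s := by omega
          subst h1
          have e1 : κ2 (2*s+1) = (κ2 s + κ2 (s+1))/2 + 1 := h2o s
          have e2 : κ2 (2*s) = κ2 s := h2e s
          constructor <;> [skip; skip] <;> rw [e1, e2] <;> linarith [ihs.1, ihs.2]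
      · have hst : s < t := by omega
        have ihs := ih s hst
        have h1 : t = 2*s+1 := by omega
        subst h1
        have e1 : κ2 (2*s+1) = (κ2 s + κ2 (s+1))/2 + 1 := h2o s
        have e2 : κ2 (2*s+1+1) = κ2 (s+1) := by
          have : 2*s+1+1 = 2*(s+1) := by ring
          rw [this, h2e]
        constructor <;> rw [e1, e2] <;> linarith [ihs.1, ihs.2]
  intro t k hk
  set u := κ2 t with hu
  set v := κ2 (t+1) with hv
  set p := κ3 t with hp
  set q := κ3 (t+1) with hq
  have hA : κ2 (2*t+1) = (u+v)/2 + 1 := h2o t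
  have hQ : κ3 (2*t+1) = (p+q)/2 + (3/2)*(u-v) := h3o t
  -- explicit formulas
  have key : ∀ k : ℕ, 1 ≤ k →
      κ2 (2^(k+1)*t + 2^k - 1) = (u+v)/2 + 3 + ((u-v)/4 - 3/2)/2^(k-1)
    ∧ κ3 (2^(k+1)*t + 2^k - 1) = ((p+q)/2 + (3/2)*(u-v)) + 6
        + ((p - ((p+q)/2 + (3/2)*(u-v)))/2 - 3 + 3*((u-v)/4 - 3/2)*k)/2^(k-1) := by
    intro k hk
    induction k, hk using Nat.le_induction with
    | base =>
        have hidx : 2^(1+1)*t + 2^1 - 1 = 2*(2*t)+1 := by omega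
        rw [hidx]
        have e2 : κ2 (2*(2*t)+1) = (κ2 (2*t) + κ2 (2*t+1))/2 + 1 := h2o (2*t)
        have e3 : κ3 (2*(2*t)+1) = (κ3 (2*t) + κ3 (2*t+1))/2 + (3/2)*(κ2 (2*t) - κ2 (2*t+1)) :=
          h3o (2*t)
        have ee2 : κ2 (2*t) = u := h2e t
        have ee3 : κ3 (2*t) = p := h3e t
        rw [e2, e3, ee2, ee3, hA, hQ]
        constructor <;> · norm_num; ring
    | succ n hn ih =>
        have h0 : 1 ≤ (2:ℕ)^n := Nat.one_le_two_pow
        have hr1 : (2:ℕ)^n*(2*t) = 2^(n+1)*t := by ring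
        have hr2 : 2*(2^(n+1)*t) = 2^(n+1+1)*t := by ring
        have hr3 : 2*2^n = (2:ℕ)^(n+1) := by ring
        have hr4 : (2:ℕ)^n*(2*t+1) = 2^(n+1)*t + 2^n := by ring
        set m := 2^(n+1)*t + 2^n - 1 with hm
        have hidx : 2^(n+1+1)*t + 2^(n+1) - 1 = 2*m + 1 := by omega
        have hm1 : m + 1 = 2^n * (2*t+1) := by omega
        rw [hidx]
        have e2 : κ2 (2*m+1) = (κ2 m + κ2 (m+1))/2 + 1 := h2o m
        have e3 : κ3 (2*m+1) = (κ3 m + κ3 (m+1))/2 + (3/2)*(κ2 m - κ2 (m+1)) := h3o m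
        have f2 : κ2 (m+1) = (u+v)/2 + 1 := by rw [hm1, hp2, hA]
        have f3 : κ3 (m+1) = (p+q)/2 + (3/2)*(u-v) := by rw [hm1, hp3, hQ]
        obtain ⟨j, hj⟩ : ∃ j, n = j + 1 := ⟨n-1, by omega⟩
        subst hj
        have hpow : (2:ℚ)^(j+1+1-1) = 2 * 2^(j+1-1) := by
          norm_num [pow_succ]; ring
        rw [e2, e3, f2, f3, ih.1, ih.2, hpow]
        have hEne : ((2:ℚ)^(j+1-1)) ≠ 0 := by positivity
        constructor
        · field_simp
          push_cast
          ring
        · field_simp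
          push_cast
          ring
  obtain ⟨k2eq, k3eq⟩ := key k hk
  set E := (2:ℚ)^(k-1) with hE
  have hEpos : (0:ℚ) < E := by positivity
  have hE1 : (1:ℚ) ≤ E := one_le_pow₀ (by norm_num)
  have hk1 : (1:ℚ) ≤ (k:ℚ) := by exact_mod_cast hk
  have hdt := hd t
  have hδ1 : -2 ≤ v - u := hdt.1
  have hδ2 : v - u ≤ 2 := hdt.2
  set P : ℚ := (u+v)/2 + 1 - ((p+q)/2 + (3/2)*(u-v))/3 with hP
  set R : ℚ := ((u-v)/4 - 3/2) - (p - ((p+q)/2 + (3/2)*(u-v)))/6 + 1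
      - ((u-v)/4 - 3/2)*k with hR
  have hb : (0:ℚ) ≤ (2 + (v-u)) * E :=
    mul_nonneg (by linarith) (le_of_lt hEpos)
  have hc : (0:ℚ) ≤ ((v-u) + 2) * ((k:ℚ) - 1) :=
    mul_nonneg (by linarith) (by linarith)
  have main : min (u - p/3) (v - q/3) * E + k ≤ P*E + R := by
    rcases le_total (u - p/3) (v - q/3) with h | h
    · rw [min_eq_left h]
      have hs : (0:ℚ) ≤ (v - q/3) - (u - p/3) := by linarith
      have ha : (0:ℚ) ≤ ((v - q/3) - (u - p/3)) * (E - 1) :=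
        mul_nonneg hs (by linarith)
      have hid : P*E + R - ((u - p/3)*E + k)
          = ((v - q/3) - (u - p/3)) * (E - 1)/2 + ((v - q/3) - (u - p/3))/4
            + (2 + (v-u)) * E/2 + ((v-u) + 2) * ((k:ℚ) - 1)/4 := by
        rw [hP, hR]; ring
      linarith
    · rw [min_eq_right h]
      have hs : (0:ℚ) ≤ (u - p/3) - (v - q/3) := by linarith
      have ha : (0:ℚ) ≤ ((u - p/3) - (v - q/3)) * E :=
        mul_nonneg hs (le_of_lt hEpos)
      have hid : P*E + R - ((v - q/3)*E + k)
          = ((u - p/3) - (v - q/3)) * E/2 + (2 + (v-u)) * E/2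
            + ((u - p/3) - (v - q/3))/4 + ((v-u) + 2) * ((k:ℚ) - 1)/4 := by
        rw [hP, hR]; ring
      linarith
  calc min (u - p/3) (v - q/3) + (k:ℚ)/E
      = (min (u - p/3) (v - q/3) * E + k)/E := by field_simp
    _ ≤ (P*E + R)/E := by exact (div_le_div_iff_of_pos_right hEpos).mpr main
    _ = κ2 (2^(k+1)*t + 2^k - 1) - κ3 (2^(k+1)*t + 2^k - 1) / 3 := by
        rw [k2eq, k3eq]; field_simp; ring
end

section
/- Define m(t)=min(D(t),D(t+1)) with D(t)=κ₂(t)−κ₃(t)/3. Then for all t, min(m(2t), m(2t+1)) ≥ m(t). -/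
lemma kappa2_diff (κ2 : ℕ → ℚ) (h2z : κ2 0 = 0)
    (h2o : ∀ t, κ2 (2*t+1) = (κ2 t + κ2 (t+1))/2 + 1)
    (h2e : ∀ t, κ2 (2*t) = κ2 t) :
    ∀ t, κ2 t - κ2 (t+1) ≤ 2 := by
  intro t
  induction t using Nat.strong_induction_on with
  | _ t ih =>
    rcases Nat.even_or_odd t with ⟨s, hs⟩ | ⟨s, hs⟩
    · rcases Nat.eq_zero_or_pos s with rfl | hpos
      · subst hs
        have h1 := h2o 0
        simp at h1
        have : κ2 1 = 2 := by linarith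
        simp [h2z, this]
      · have hA := ih s (by omega)
        have he := h2e s
        have ho := h2o s
        have : t = 2*s := by omega
        subst this
        linarith
    · have hA := ih s (by omega)
      have ho := h2o s
      have he := h2e (s+1)
      have h1 : t = 2*s+1 := by omega
      rw [h1]
      have h2 : 2*s+1+1 = 2*(s+1) := by omega
      rw [h2, ho, he]
      linarith

theorem stmt_15 (κ2 : ℕ → ℚ) (h2z : κ2 0 = 0)
    (h2e : ∀ t, κ2 (2*t) = κ2 t)
    (h2o : ∀ t, κ2 (2*t+1) = (κ2 t + κ2 (t+1))/2 + 1) (κ3 : ℕ → ℚ) (h3z : κ3 0 = 0)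
    (h3e : ∀ t, κ3 (2*t) = κ3 t)
    (h3o : ∀ t, κ3 (2*t+1) = (κ3 t + κ3 (t+1))/2 + (3/2)*(κ2 t - κ2 (t+1))) :
    ∀ t : ℕ,
      (fun s : ℕ => min (κ2 s - κ3 s / 3) (κ2 (s+1) - κ3 (s+1) / 3)) t
        ≤ min ((fun s : ℕ => min (κ2 s - κ3 s / 3) (κ2 (s+1) - κ3 (s+1) / 3)) (2*t))
            ((fun s : ℕ => min (κ2 s - κ3 s / 3) (κ2 (s+1) - κ3 (s+1) / 3)) (2*t+1)) := by
  intro t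
  simp only
  have hA := kappa2_diff κ2 h2z h2o h2e t
  have hstep : 2*t+1+1 = 2*(t+1) := by omega
  rw [hstep, h2e t, h3e t, h2o t, h3o t, h2e (t+1), h3e (t+1)]
  have h1 : min (κ2 t - κ3 t / 3) (κ2 (t+1) - κ3 (t+1) / 3) ≤ κ2 t - κ3 t / 3 :=
    min_le_left _ _
  have h2 : min (κ2 t - κ3 t / 3) (κ2 (t+1) - κ3 (t+1) / 3) ≤ κ2 (t+1) - κ3 (t+1) / 3 :=
    min_le_right _ _
  refine le_min (le_min h1 ?_) (le_min ?_ h2) <;> linarith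
end

section
/- With m(t)=min(D(t),D(t+1)) and D(t)=κ₂(t)−κ₃(t)/3, for all t ≥ 0, m(8t+1) ≥ m(t)+1. -/
theorem stmt_16 (κ2 : ℕ → ℚ) (h2z : κ2 0 = 0)
    (h2e : ∀ t, κ2 (2*t) = κ2 t)
    (h2o : ∀ t, κ2 (2*t+1) = (κ2 t + κ2 (t+1))/2 + 1) (κ3 : ℕ → ℚ) (h3z : κ3 0 = 0)
    (h3e : ∀ t, κ3 (2*t) = κ3 t)
    (h3o : ∀ t, κ3 (2*t+1) = (κ3 t + κ3 (t+1))/2 + (3/2)*(κ2 t - κ2 (t+1))) :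
    ∀ t : ℕ,
      min (κ2 t - κ3 t / 3) (κ2 (t+1) - κ3 (t+1) / 3) + 1
        ≤ min (κ2 (8*t+1) - κ3 (8*t+1) / 3) (κ2 (8*t+2) - κ3 (8*t+2) / 3) := by
  have key : ∀ t, -2 ≤ κ2 (t+1) - κ2 t ∧ κ2 (t+1) - κ2 t ≤ 2 := by
    intro t
    induction t using Nat.strong_induction_on with
    | _ t ih =>
      match t with
      | 0 =>
        have h := h2o 0
        norm_num [h2z] at h
        rw [h2z]
        constructor <;> linarith
      | (s+1) =>
        rcases Nat.even_or_odd (s+1) with ⟨k, hk⟩ | ⟨k, hk⟩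
        · -- t = 2k, k ≥ 1
          have hk' : s + 1 = 2 * k := by omega
          obtain ⟨a1, a2⟩ := ih k (by omega)
          have e1 : κ2 (s+1) = κ2 k := by rw [hk']; exact h2e k
          have e2 : κ2 (s+1+1) = (κ2 k + κ2 (k+1))/2 + 1 := by
            have h' : s + 1 + 1 = 2*k + 1 := by omega
            rw [h']; exact h2o k
          rw [e1, e2]; constructor <;> linarith
        · -- t = 2k+1
          have hk' : s + 1 = 2 * k + 1 := by omega
          obtain ⟨a1, a2⟩ := ih k (by omega)
          have e1 : κ2 (s+1) = (κ2 k + κ2 (k+1))/2 + 1 := by rw [hk']; exact h2o k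
          have e2 : κ2 (s+1+1) = κ2 (k+1) := by
            have h' : s + 1 + 1 = 2*(k+1) := by omega
            rw [h']; exact h2e (k+1)
          rw [e1, e2]; constructor <;> linarith
  intro t
  obtain ⟨b1, b2⟩ := key t
  -- expand κ2 and κ3 at 8t+1, 8t+2, 4t+1, 2t+1, 2t
  have e2t2 : κ2 (2*t) = κ2 t := h2e t
  have e3t2 : κ3 (2*t) = κ3 t := h3e t
  have e2t1 : κ2 (2*t+1) = (κ2 t + κ2 (t+1))/2 + 1 := h2o t
  have e3t1 : κ3 (2*t+1) = (κ3 t + κ3 (t+1))/2 + (3/2)*(κ2 t - κ2 (t+1)) := h3o t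
  have e24 : κ2 (4*t) = κ2 t := by
    have h' : 4*t = 2*(2*t) := by ring
    rw [h', h2e, e2t2]
  have e34 : κ3 (4*t) = κ3 t := by
    have h' : 4*t = 2*(2*t) := by ring
    rw [h', h3e, e3t2]
  have e241 : κ2 (4*t+1) = (κ2 (2*t) + κ2 (2*t+1))/2 + 1 := by
    have h' : 4*t+1 = 2*(2*t)+1 := by ring
    rw [h']; exact h2o (2*t)
  have e341 : κ3 (4*t+1) = (κ3 (2*t) + κ3 (2*t+1))/2 + (3/2)*(κ2 (2*t) - κ2 (2*t+1)) := by
    have h' : 4*t+1 = 2*(2*t)+1 := by ring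
    rw [h']; exact h3o (2*t)
  have e281 : κ2 (8*t+1) = (κ2 (4*t) + κ2 (4*t+1))/2 + 1 := by
    have h' : 8*t+1 = 2*(4*t)+1 := by ring
    rw [h']; exact h2o (4*t)
  have e381 : κ3 (8*t+1) = (κ3 (4*t) + κ3 (4*t+1))/2 + (3/2)*(κ2 (4*t) - κ2 (4*t+1)) := by
    have h' : 8*t+1 = 2*(4*t)+1 := by ring
    rw [h']; exact h3o (4*t)
  have e282 : κ2 (8*t+2) = κ2 (4*t+1) := by
    have h' : 8*t+2 = 2*(4*t+1) := by ring
    rw [h']; exact h2e (4*t+1)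
  have e382 : κ3 (8*t+2) = κ3 (4*t+1) := by
    have h' : 8*t+2 = 2*(4*t+1) := by ring
    rw [h']; exact h3e (4*t+1)
  have m1 : min (κ2 t - κ3 t / 3) (κ2 (t+1) - κ3 (t+1) / 3) ≤ κ2 t - κ3 t / 3 :=
    min_le_left _ _
  have m2 : min (κ2 t - κ3 t / 3) (κ2 (t+1) - κ3 (t+1) / 3) ≤ κ2 (t+1) - κ3 (t+1) / 3 :=
    min_le_right _ _
  rw [le_min_iff]
  constructor
  · rw [e281, e381, e241, e341, e24, e34, e2t1, e3t1, e2t2, e3t2]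
    linarith
  · rw [e282, e382, e241, e341, e2t1, e3t1, e2t2, e3t2]
    linarith
end

section
/- For all t ≥ 0 and k ≥ 0, setting t^{(k)} = 2^k·t + 2^k − 1, one has κ₂(t^{(k)}) − κ₂(t+1) = (κ₂(t)−κ₂(t+1))/2^k + (2^k−1)/2^{k−1}. -/
theorem stmt_17 (κ2 : ℕ → ℚ) (h2z : κ2 0 = 0)
    (h2e : ∀ t, κ2 (2*t) = κ2 t)
    (h2o : ∀ t, κ2 (2*t+1) = (κ2 t + κ2 (t+1))/2 + 1) :
    ∀ t k : ℕ,
      κ2 (2^k*t + 2^k - 1) - κ2 (t+1)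
        = (κ2 t - κ2 (t+1))/2^k + ((2:ℚ)^k-1)/2^(k-1) := by
  have hpow : ∀ k n, κ2 (2^k * n) = κ2 n := by
    intro k
    induction k with
    | zero => intro n; simp
    | succ k ih =>
      intro n
      rw [pow_succ, mul_comm (2^k) 2, mul_assoc, h2e, ih]
  have main : ∀ t k : ℕ,
      κ2 (2^k*t + 2^k - 1) - κ2 (t+1)
        = (κ2 t - κ2 (t+1))/2^k + 2*((2:ℚ)^k-1)/2^k := by
    intro t k
    induction k with
    | zero => simp
    | succ k ih =>
      have h1 : 1 ≤ (2:ℕ)^k := Nat.one_le_two_pow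
      have hm : 2^(k+1)*t + 2^(k+1) - 1 = 2*(2^k*t + 2^k - 1) + 1 := by
        have he : 2^(k+1)*t + 2^(k+1) = 2*(2^k*t + 2^k) := by ring
        omega
      have hm1 : (2^k*t + 2^k - 1) + 1 = 2^k*(t+1) := by
        have he : 2^k*(t+1) = 2^k*t + 2^k := by ring
        omega
      rw [hm, h2o, hm1, hpow]
      have h2 : (0:ℚ) < 2^k := by positivity
      field_simp at ih ⊢
      ring_nf at ih ⊢
      linarith [ih]
  intro t k
  rw [main t k]
  congr 1
  cases k with
  | zero => simp
  | succ j =>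
    have h2 : (0:ℚ) < 2^j := by positivity
    simp only [Nat.add_sub_cancel, pow_succ]
    field_simp
end

section
/- Define S(n) = (κ₂(n), κ₂(n+1), 1)ᵀ and matrices B₀ = [[1,0,0],[1/2,1/2,1],[0,0,1]], B₁ = [[1/2,1/2,1],[0,1,0],[0,0,1]]. Then for all n ≥ 0, S(2n) = B₀·S(n) and S(2n+1) = B₁·S(n). -/
theorem stmt_19 (κ2 : ℕ → ℚ) (h2z : κ2 0 = 0)
    (h2e : ∀ t, κ2 (2*t) = κ2 t)
    (h2o : ∀ t, κ2 (2*t+1) = (κ2 t + κ2 (t+1))/2 + 1) :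
    ∀ n : ℕ,
      (!![1, 0, 0; 1/2, 1/2, 1; 0, 0, 1] : Matrix (Fin 3) (Fin 3) ℚ).mulVec
          ![κ2 n, κ2 (n+1), 1] = ![κ2 (2*n), κ2 (2*n+1), 1] ∧
      (!![1/2, 1/2, 1; 0, 1, 0; 0, 0, 1] : Matrix (Fin 3) (Fin 3) ℚ).mulVec
          ![κ2 n, κ2 (n+1), 1] = ![κ2 (2*n+1), κ2 (2*n+2), 1] := by
  intro n
  have e1 : κ2 (2*n+2) = κ2 (n+1) := by
    have := h2e (n+1); rw [show 2*(n+1) = 2*n+2 by ring] at this; exact this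
  constructor <;>
  · funext i
    fin_cases i <;>
      simp [Matrix.mulVec, dotProduct, Fin.sum_univ_three, h2e, h2o, e1] <;> ring
end
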